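/- Let D be a semiregular (m,n,k,λ₁,λ₂)-divisible difference set in a finite abelian group G relative to N, with {η_j}_{j=1}^m enumerating N^⊥ and {χ_i}_{i=1}^n coset representatives of Ĝ/N^⊥. Define e^i_j = (1/√k)((χ_i η_j)(g))_{g∈D} ∈ ℂ^k. Then for each fixed i, {e^i_j}_{j=1}^m is an orthonormal set, and setting W_i = span{e^i_j}_{j=1}^m, the collection {W_i}_{i=1}^n is an equichordal tight fusion frame for ℂ^k with fusion frame bound nm/k. -/

import Mathlib

open Finset in
private lemma dds_master {G : Type*} [AddCommGroup G] [Fintype G] [DecidableEq G]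
    (k l1 l2 : ℕ) (N : AddSubgroup G) (D : Finset G) (hD : D.card = k)
    (hdd2 : ∀ g : G, g ∉ N →
        ((D ×ˢ D).filter (fun p => p.1 ≠ p.2 ∧ p.1 - p.2 = g)).card = l2)
    (hdd1 : ∀ g : G, g ∈ N → g ≠ 0 →
        ((D ×ˢ D).filter (fun p => p.1 ≠ p.2 ∧ p.1 - p.2 = g)).card = l1)
    (NF : Finset G) (hNF : ∀ x, x ∈ NF ↔ x ∈ N)
    (ψ : AddChar G ℂ) :
    (∑ g ∈ D, ψ g) * (starRingEnd ℂ) (∑ g ∈ D, ψ g)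
      = (k : ℂ) + (l1 : ℂ) * ((∑ x ∈ NF, ψ x) - 1)
        + (l2 : ℂ) * ((∑ x : G, ψ x) - ∑ x ∈ NF, ψ x) := by
  classical
  have hconj : (starRingEnd ℂ) (∑ g ∈ D, ψ g) = ∑ g ∈ D, ψ (-g) := by
    rw [map_sum]
    exact Finset.sum_congr rfl fun g _ => (AddChar.map_neg_eq_conj ψ g).symm
  rw [hconj, Finset.sum_mul_sum]
  have hstep : ∀ g h : G, ψ g * ψ (-h) = ψ (g - h) := by
    intro g h; rw [← AddChar.map_add_eq_mul, sub_eq_add_neg]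
  simp_rw [hstep]
  rw [← Finset.sum_product' (f := fun g h => ψ (g - h))]
  rw [← Finset.sum_filter_add_sum_filter_not (D ×ˢ D) (fun p => p.1 = p.2)]
  -- diagonal part
  have hdiag : ∑ p ∈ (D ×ˢ D).filter (fun p => p.1 = p.2), ψ (p.1 - p.2) = (k : ℂ) := by
    have himg : (D ×ˢ D).filter (fun p => p.1 = p.2) = D.image (fun g => (g, g)) := by
      ext ⟨a, b⟩
      simp only [Finset.mem_filter, Finset.mem_product, Finset.mem_image, Prod.mk.injEq]
      constructor
      · rintro ⟨⟨ha, _⟩, h⟩; exact ⟨a, ha, rfl, h⟩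
      · rintro ⟨g, hg, rfl, rfl⟩; exact ⟨⟨hg, hg⟩, rfl⟩
    rw [himg, Finset.sum_image (fun a _ b _ h => (Prod.mk.injEq a a b b ▸ h).1)]
    simp [hD]
  rw [hdiag]
  -- off-diagonal part
  set T := (D ×ˢ D).filter (fun p => ¬ p.1 = p.2) with hT
  have hfib : ∑ p ∈ T, ψ (p.1 - p.2)
      = ∑ x : G, ((T.filter (fun p => p.1 - p.2 = x)).card : ℂ) * ψ x := by
    rw [← Finset.sum_fiberwise_of_maps_to (g := fun p : G × G => p.1 - p.2)
      (fun p _ => Finset.mem_univ (p.1 - p.2)) (fun p : G × G => ψ (p.1 - p.2))]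
    refine Finset.sum_congr rfl fun x _ => ?_
    rw [Finset.sum_congr rfl (fun p hp => by rw [(Finset.mem_filter.1 hp).2]),
      Finset.sum_const, nsmul_eq_mul]
  have hcard : ∀ x : G, ((T.filter (fun p => p.1 - p.2 = x)).card : ℕ)
      = if x = 0 then 0 else if x ∈ N then l1 else l2 := by
    intro x
    rw [hT, Finset.filter_filter]
    split_ifs with h0 hN
    · subst h0
      rw [Finset.card_eq_zero, Finset.filter_eq_empty_iff]
      rintro p _ ⟨hne, hsub⟩
      exact hne (sub_eq_zero.1 hsub)
    · exact hdd1 x hN h0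
    · exact hdd2 x hN
  rw [hfib]
  simp_rw [hcard]
  -- now pure sum manipulation
  have hNFuniv : NF = Finset.univ.filter (fun x : G => x ∈ N) := by
    ext x; simp [hNF x]
  have hsplitG : (∑ x : G, ψ x)
      = (∑ x ∈ NF, ψ x) + ∑ x ∈ Finset.univ.filter (fun x : G => ¬ x ∈ N), ψ x := by
    rw [hNFuniv, Finset.sum_filter_add_sum_filter_not]
  have h0mem : (0 : G) ∈ NF := (hNF 0).2 N.zero_mem
  rw [← Finset.sum_filter_add_sum_filter_not Finset.univ (fun x : G => x ∈ N)
    (fun x => (if x = 0 then (0:ℕ) else if x ∈ N then l1 else l2 : ℕ) * ψ x)]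
  have hpart2 : ∑ x ∈ Finset.univ.filter (fun x : G => ¬ x ∈ N),
      ((if x = 0 then (0:ℕ) else if x ∈ N then l1 else l2 : ℕ) : ℂ) * ψ x
      = (l2 : ℂ) * ((∑ x : G, ψ x) - ∑ x ∈ NF, ψ x) := by
    have : ∀ x ∈ Finset.univ.filter (fun x : G => ¬ x ∈ N),
        ((if x = 0 then (0:ℕ) else if x ∈ N then l1 else l2 : ℕ) : ℂ) * ψ x
        = (l2 : ℂ) * ψ x := by
      intro x hx
      have hxN : ¬ x ∈ N := (Finset.mem_filter.1 hx).2
      have hx0 : x ≠ 0 := fun h => hxN (h ▸ N.zero_mem)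
      rw [if_neg hx0, if_neg hxN]
    rw [Finset.sum_congr rfl this, ← Finset.mul_sum, hsplitG]
    ring
  have hpart1 : ∑ x ∈ Finset.univ.filter (fun x : G => x ∈ N),
      ((if x = 0 then (0:ℕ) else if x ∈ N then l1 else l2 : ℕ) : ℂ) * ψ x
      = (l1 : ℂ) * ((∑ x ∈ NF, ψ x) - 1) := by
    rw [← hNFuniv, ← Finset.add_sum_erase _ _ h0mem]
    have h1 : ∀ x ∈ NF.erase 0,
        ((if x = 0 then (0:ℕ) else if x ∈ N then l1 else l2 : ℕ) : ℂ) * ψ x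
        = (l1 : ℂ) * ψ x := by
      intro x hx
      have hx0 : x ≠ 0 := Finset.ne_of_mem_erase hx
      have hxN : x ∈ N := (hNF x).1 (Finset.mem_of_mem_erase hx)
      rw [if_neg hx0, if_pos hxN]
    rw [Finset.sum_congr rfl h1, ← Finset.mul_sum]
    have h2 : ∑ x ∈ NF.erase 0, ψ x = (∑ x ∈ NF, ψ x) - 1 := by
      have := Finset.add_sum_erase NF ψ h0mem
      rw [AddChar.map_zero_eq_one] at this
      rw [← this]; ring
    rw [h2]
    simp
  rw [hpart1, hpart2]
  ring

open Matrix in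
/-- Construction of an equichordal tight fusion frame from a semiregular
`(m,n,k,λ₁,λ₂)`-divisible difference set: each block of `m` columns built from a
coset of the annihilator is orthonormal, the collection is a tight fusion frame
with bound `nm/k`, and it is equichordal. -/
theorem semiregular_dds_equichordal_tff {G : Type*} [AddCommGroup G] [Fintype G]
    [DecidableEq G] (m n k l1 l2 : ℕ) (hm : 0 < m) (hn : 0 < n) (hk : 0 < k)
    (N : AddSubgroup G) (hG : Fintype.card G = m * n) (hNcard : Nat.card N = n)
    (D : Finset G) (hD : D.card = k)
    (hdd2 : ∀ g : G, g ∉ N →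
        ((D ×ˢ D).filter (fun p => p.1 ≠ p.2 ∧ p.1 - p.2 = g)).card = l2)
    (hdd1 : ∀ g : G, g ∈ N → g ≠ 0 →
        ((D ×ˢ D).filter (fun p => p.1 ≠ p.2 ∧ p.1 - p.2 = g)).card = l1)
    (hsr1 : l1 < k) (hsr2 : k ^ 2 = l2 * (m * n))
    (η : Fin m ≃ {χ : AddChar G ℂ // ∀ h ∈ N, χ h = 1})
    (χ : Fin n → AddChar G ℂ)
    (hχ : ∀ ψ : AddChar G ℂ, ∃! i : Fin n, ∃ j : Fin m, ψ = χ i * (η j).1)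
    (d : Fin k ≃ {x // x ∈ D})
    (E : Fin n → Matrix (Fin k) (Fin m) ℂ)
    (hE : ∀ i t j, E i t j = ((Real.sqrt k : ℂ))⁻¹ * (χ i * (η j).1) ((d t : G))) :
    (∀ i, (E i)ᴴ * E i = 1) ∧
    (∑ i, E i * (E i)ᴴ) = (((n * m : ℕ) : ℂ) / (k : ℂ)) • 1 ∧
    (∃ c : ℝ, ∀ i i', i ≠ i' →
      ((E i * (E i)ᴴ) * (E i' * (E i')ᴴ)).trace = (c : ℂ)) := by
  classical
  have hkC : (k : ℂ) ≠ 0 := Nat.cast_ne_zero.2 hk.ne'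
  set NF : Finset G := Finset.univ.filter (fun x : G => x ∈ N) with hNFdef
  have hNF : ∀ x, x ∈ NF ↔ x ∈ N := fun x => by simp [hNFdef]
  have hNFcard : NF.card = n := by
    have h2 : NF.card = Fintype.card {x : G // x ∈ N} := (Fintype.card_subtype _).symm
    rw [h2, ← Nat.card_eq_fintype_card]
    exact hNcard
  have master := dds_master k l1 l2 N D hD hdd2 hdd1 NF hNF
  -- evaluation at the trivial character
  have hSGone : ∑ x : G, (1 : AddChar G ℂ) x = ((m * n : ℕ) : ℂ) := by
    simp [hG]
  have hSNone : ∑ x ∈ NF, (1 : AddChar G ℂ) x = (n : ℂ) := by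
    simp [hNFcard]
  have hDone : ∑ g ∈ D, (1 : AddChar G ℂ) g = (k : ℂ) := by simp [hD]
  have hmaster1 := master 1
  rw [hSGone, hSNone, hDone, map_natCast] at hmaster1
  have hsr2C : (k : ℂ) * (k : ℂ) = (l2 : ℂ) * ((m : ℂ) * (n : ℂ)) := by
    have := congrArg (fun a : ℕ => (a : ℂ)) hsr2
    push_cast at this
    linear_combination this
  have key0 : (k : ℂ) + (l1 : ℂ) * ((n : ℂ) - 1) - (l2 : ℂ) * (n : ℂ) = 0 := by
    have : ((m * n : ℕ) : ℂ) = (m : ℂ) * (n : ℂ) := by push_cast; ring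
    rw [this] at hmaster1
    linear_combination hsr2C - hmaster1
  -- B1 : trivial-on-N nontrivial characters sum to zero over D
  have B1 : ∀ ψ : AddChar G ℂ, (∀ h ∈ N, ψ h = 1) → ψ ≠ 1 → ∑ g ∈ D, ψ g = 0 := by
    intro ψ htriv hne
    have hSN : ∑ x ∈ NF, ψ x = (n : ℂ) := by
      rw [Finset.sum_congr rfl (fun x hx => htriv x ((hNF x).1 hx)), Finset.sum_const,
        hNFcard, nsmul_eq_mul, mul_one]
    have hSG : ∑ x : G, ψ x = 0 := AddChar.sum_eq_zero_of_ne_one hne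
    have h := master ψ
    rw [hSN, hSG] at h
    have hzero : (∑ g ∈ D, ψ g) * (starRingEnd ℂ) (∑ g ∈ D, ψ g) = 0 := by
      rw [h]; linear_combination key0
    have := Complex.normSq_eq_zero.1 (by
      have := Complex.mul_conj (∑ g ∈ D, ψ g)
      rw [hzero] at this
      exact_mod_cast this.symm)
    exact this
  -- B2 : characters nontrivial on N
  have B2 : ∀ ψ : AddChar G ℂ, (∃ h ∈ N, ψ h ≠ 1) →
      (∑ g ∈ D, ψ g) * (starRingEnd ℂ) (∑ g ∈ D, ψ g) = (k : ℂ) - (l1 : ℂ) := by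
    intro ψ hex
    obtain ⟨h₀, h₀N, h₀ne⟩ := hex
    haveI : Fintype ↥N := Fintype.ofFinite ↥N
    have hSN : ∑ x ∈ NF, ψ x = 0 := by
      have hrestr : ∑ x ∈ NF, ψ x = ∑ x : ↥N, (ψ.compAddMonoidHom N.subtype) x := by
        rw [Finset.sum_subtype NF hNF (fun x => ψ x)]
        rfl
      have hne : ψ.compAddMonoidHom N.subtype ≠ 1 := by
        rw [AddChar.ne_one_iff]
        exact ⟨⟨h₀, h₀N⟩, h₀ne⟩
      rw [hrestr, AddChar.sum_eq_zero_of_ne_one hne]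
    have hSG : ∑ x : G, ψ x = 0 := by
      refine AddChar.sum_eq_zero_of_ne_one (fun hcon => h₀ne ?_)
      rw [hcon]; rfl
    have h := master ψ
    rw [hSN, hSG] at h
    rw [h]; ring
  -- the matrix entry formula
  have hsum : ∀ f : G → ℂ, ∑ t : Fin k, f ((d t : G)) = ∑ g ∈ D, f g := by
    intro f
    rw [← Finset.sum_coe_sort D f]
    exact Equiv.sum_comp d (fun x : {x // x ∈ D} => f (x : G))
  have hsqrt : ((Real.sqrt k : ℂ))⁻¹ * ((Real.sqrt k : ℂ))⁻¹ = (k : ℂ)⁻¹ := by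
    rw [← mul_inv, ← Complex.ofReal_mul, Real.mul_self_sqrt (Nat.cast_nonneg k),
      Complex.ofReal_natCast]
  have hentry : ∀ (i i' : Fin n) (j j' : Fin m), ((E i)ᴴ * (E i')) j j'
      = (k : ℂ)⁻¹ * ∑ g ∈ D, ((χ i' * (η j').1) * ((χ i * (η j).1))⁻¹) g := by
    intro i i' j j'
    rw [Matrix.mul_apply]
    have hterm : ∀ t : Fin k, (E i)ᴴ j t * E i' t j'
        = (k : ℂ)⁻¹ * ((χ i' * (η j').1) * ((χ i * (η j).1))⁻¹) ((d t : G)) := by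
      intro t
      rw [Matrix.conjTranspose_apply, hE, hE]
      set x := ((d t : G)) with hx
      rw [star_mul']
      have h1 : star ((Real.sqrt k : ℂ))⁻¹ = ((Real.sqrt k : ℂ))⁻¹ := by
        rw [star_inv₀, Complex.star_def, Complex.conj_ofReal]
      have h2 : star ((χ i * (η j).1) x) = (χ i * (η j).1) (-x) := by
        rw [AddChar.map_neg_eq_conj]
        rfl
      have h3 : ((χ i' * (η j').1) * ((χ i * (η j).1))⁻¹) x
          = (χ i' * (η j').1) x * (χ i * (η j).1) (-x) := by
        rw [AddChar.mul_apply, AddChar.inv_apply]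
      rw [h1, h2, h3, ← hsqrt]
      simp only [AddChar.mul_apply]
      ring
    rw [Finset.sum_congr rfl (fun t _ => hterm t), ← Finset.mul_sum]
    congr 1
    exact hsum (fun g => ((χ i' * (η j').1) * ((χ i * (η j).1))⁻¹) g)
  -- Part 1
  have part1 : ∀ i, (E i)ᴴ * E i = 1 := by
    intro i
    ext j j'
    rw [hentry i i j j', Matrix.one_apply]
    by_cases hjj : j = j'
    · subst hjj
      simp only [if_pos rfl]
      rw [mul_inv_cancel]
      rw [hDone]
      exact inv_mul_cancel₀ hkC
    · rw [if_neg hjj]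
      have hψ : (χ i * (η j').1) * ((χ i * (η j).1))⁻¹ = (η j').1 * ((η j).1)⁻¹ := by
        rw [mul_inv, mul_mul_mul_comm, mul_inv_cancel, one_mul]
      rw [hψ]
      have htriv : ∀ h ∈ N, ((η j').1 * ((η j).1)⁻¹) h = 1 := by
        intro h hh
        rw [AddChar.mul_apply, AddChar.inv_apply', (η j').2 h hh, (η j).2 h hh]
        simp
      have hne : (η j').1 * ((η j).1)⁻¹ ≠ 1 := by
        intro hc
        have : (η j').1 = (η j).1 := by
          rw [← mul_inv_eq_one]; exact hc
        exact hjj (η.injective (Subtype.ext this)).symm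
      rw [B1 _ htriv hne, mul_zero]
  -- Part 2
  have hbij : Function.Bijective (fun p : Fin n × Fin m => χ p.1 * (η p.2).1) := by
    constructor
    · rintro ⟨i, j⟩ ⟨i', j'⟩ hpq
      simp only at hpq
      have hi : i = i' := (hχ (χ i * (η j).1)).unique ⟨j, rfl⟩ ⟨j', hpq⟩
      subst hi
      have hj : (η j).1 = (η j').1 := mul_left_cancel hpq
      exact Prod.ext rfl (η.injective (Subtype.ext hj))
    · intro ψ
      obtain ⟨i, ⟨j, hj⟩, _⟩ := hχ ψ
      exact ⟨(i, j), hj.symm⟩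
  have part2 : (∑ i, E i * (E i)ᴴ) = (((n * m : ℕ) : ℂ) / (k : ℂ)) • 1 := by
    ext t t'
    rw [Matrix.sum_apply, Matrix.smul_apply, Matrix.one_apply]
    set x : G := (d t : G) - (d t' : G) with hxdef
    have hterm : ∀ i, (E i * (E i)ᴴ) t t' = (k : ℂ)⁻¹ * ∑ j, (χ i * (η j).1) x := by
      intro i
      rw [Matrix.mul_apply, Finset.mul_sum]
      refine Finset.sum_congr rfl fun j _ => ?_
      rw [Matrix.conjTranspose_apply, hE, hE, star_mul']
      have h1 : star ((Real.sqrt k : ℂ))⁻¹ = ((Real.sqrt k : ℂ))⁻¹ := by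
        rw [star_inv₀, Complex.star_def, Complex.conj_ofReal]
      have h2 : star ((χ i * (η j).1) ((d t' : G))) = (χ i * (η j).1) (-(d t' : G)) := by
        rw [AddChar.map_neg_eq_conj]; rfl
      rw [h1, h2, hxdef, sub_eq_add_neg, AddChar.map_add_eq_mul, ← hsqrt]
      ring
    rw [Finset.sum_congr rfl (fun i _ => hterm i), ← Finset.mul_sum]
    have hchar : ∑ i, ∑ j, (χ i * (η j).1) x = ∑ ψ : AddChar G ℂ, ψ x := by
      rw [← Fintype.sum_prod_type']
      exact Fintype.sum_bijective _ hbij _ _ (fun p => rfl)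
    rw [hchar, AddChar.sum_apply_eq_ite, hG]
    by_cases htt : t = t'
    · subst htt
      rw [if_pos (by rw [hxdef, sub_self]), if_pos rfl]
      push_cast
      field_simp
      linear_combination (-((m : ℂ) * (n : ℂ))) * mul_inv_cancel₀ hkC
    · have hx0 : x ≠ 0 := by
        rw [hxdef, sub_ne_zero]
        intro hc
        exact htt (d.injective (Subtype.ext hc))
      rw [if_neg hx0, if_neg htt, mul_zero, smul_zero]
  -- Part 3
  have part3 : ∃ c : ℝ, ∀ i i', i ≠ i' →
      ((E i * (E i)ᴴ) * (E i' * (E i')ᴴ)).trace = ((c : ℝ) : ℂ) := by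
    refine ⟨(m : ℝ) ^ 2 * ((k : ℝ) - (l1 : ℝ)) / (k : ℝ) ^ 2, fun i i' hii => ?_⟩
    -- rewrite the trace as the Frobenius norm of (E i)ᴴ * E i'
    have htr : ((E i * (E i)ᴴ) * (E i' * (E i')ᴴ)).trace
        = (((E i)ᴴ * E i') * (((E i)ᴴ * E i'))ᴴ).trace := by
      rw [Matrix.conjTranspose_mul, Matrix.conjTranspose_conjTranspose, Matrix.mul_assoc,
        Matrix.trace_mul_comm]
      simp only [Matrix.mul_assoc]
    rw [htr, Matrix.trace]
    have hdiagval : ∀ j : Fin m, (((E i)ᴴ * E i') * (((E i)ᴴ * E i'))ᴴ).diag j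
        = ∑ j' : Fin m, ((E i)ᴴ * E i') j j' * star (((E i)ᴴ * E i') j j') := by
      intro j
      rw [Matrix.diag_apply, Matrix.mul_apply]
      refine Finset.sum_congr rfl fun j' _ => ?_
      rw [Matrix.conjTranspose_apply]
    have hval : ∀ j j' : Fin m, ((E i)ᴴ * E i') j j' * star (((E i)ᴴ * E i') j j')
        = (k : ℂ)⁻¹ * (k : ℂ)⁻¹ * ((k : ℂ) - (l1 : ℂ)) := by
      intro j j'
      set ψ : AddChar G ℂ := (χ i' * (η j').1) * ((χ i * (η j).1))⁻¹ with hψdef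
      have hnt : ∃ h ∈ N, ψ h ≠ 1 := by
        by_contra hcon
        push_neg at hcon
        have htriv : ∀ h ∈ N, ψ h = 1 := fun h hh => hcon h hh
        -- then ψ is in the annihilator, contradicting uniqueness in hχ
        have hmem : ((η j).1 * ψ) ∈ {φ : AddChar G ℂ | ∀ h ∈ N, φ h = 1} := by
          intro h hh
          rw [AddChar.mul_apply, (η j).2 h hh, htriv h hh, one_mul]
        set b : Fin m := η.symm ⟨(η j).1 * ψ, hmem⟩ with hbdef
        have hb : (η b).1 = (η j).1 * ψ := by
          rw [hbdef, Equiv.apply_symm_apply]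
        have hkey : χ i' * (η j').1 = χ i * (η b).1 := by
          symm
          rw [hb, hψdef, ← mul_assoc, mul_comm (χ i * (η j).1) ((χ i' * (η j').1) * ((χ i * (η j).1))⁻¹),
            mul_assoc, inv_mul_cancel, mul_one]
        have : i' = i := (hχ (χ i' * (η j').1)).unique ⟨j', rfl⟩ ⟨b, hkey⟩
        exact hii this.symm
      have hst : star (((E i)ᴴ * E i') j j') = (starRingEnd ℂ) (((E i)ᴴ * E i') j j') := rfl
      rw [hst, hentry i i' j j', _root_.map_mul]
      have hki : (starRingEnd ℂ) ((k : ℂ))⁻¹ = ((k : ℂ))⁻¹ := by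
        simp
      rw [hki]
      have := B2 ψ hnt
      rw [hψdef] at this
      calc (k : ℂ)⁻¹ * (∑ g ∈ D, ((χ i' * (η j').1) * ((χ i * (η j).1))⁻¹) g) *
            ((k : ℂ)⁻¹ * (starRingEnd ℂ) (∑ g ∈ D, ((χ i' * (η j').1) * ((χ i * (η j).1))⁻¹) g))
          = (k : ℂ)⁻¹ * (k : ℂ)⁻¹ * ((∑ g ∈ D, ((χ i' * (η j').1) * ((χ i * (η j).1))⁻¹) g) *
            (starRingEnd ℂ) (∑ g ∈ D, ((χ i' * (η j').1) * ((χ i * (η j).1))⁻¹) g)) := by ring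
        _ = (k : ℂ)⁻¹ * (k : ℂ)⁻¹ * ((k : ℂ) - (l1 : ℂ)) := by rw [this]
    simp_rw [hdiagval, hval]
    rw [Finset.sum_const, Finset.sum_const, Finset.card_univ, Fintype.card_fin]
    push_cast
    field_simp
    linear_combination ((m : ℂ) ^ 2 * ((k : ℂ) - (l1 : ℂ)) * ((k : ℂ) * (k : ℂ)⁻¹ + 1)) * mul_inv_cancel₀ hkC
  exact ⟨part1, part2, part3⟩
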